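/- (Cancellation of augmentation terms under true propensities.) Fix a* ∈ {0,1} and suppose c := μ(A=a*, S=0) > 0 and that every w with μ(W=w) > 0 satisfies μ(W=w, A=1, S=1) > 0 and μ(W=w, A=0, S=1) > 0. Then for each a ∈ {0,1} and every function m* : 𝒲 → ℝ, E_μ[ ( 1{A=a,S=1}·g₍a*,0₎(W)/(c·g₍a,1₎(W)) − 1{A=a*,S=0}/c )·m*(W) ] = 0. -/

import Mathlib

open MeasureTheory ProbabilityTheory
open scoped Classical

noncomputable section

/-- Conditional expectation of `X` given the event `E`. -/
def cexp {Ω : Type*} [MeasurableSpace Ω] (μ : Measure Ω) (X : Ω → ℝ) (E : Set Ω) : ℝ :=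
  ∫ ω, X ω ∂(μ[|E])

/-- The event `{W = w, A = a, S = s}`. -/
def evtWAS {Ω 𝒲 : Type*} (W : Ω → 𝒲) (A S : Ω → Bool) (w : 𝒲) (a s : Bool) : Set Ω :=
  {ω | W ω = w ∧ A ω = a ∧ S ω = s}

/-- The event `{A = a, S = s}`. -/
def evtAS {Ω : Type*} (A S : Ω → Bool) (a s : Bool) : Set Ω :=
  {ω | A ω = a ∧ S ω = s}

/-- The outcome-difference regression `m_a(w) = E[Y₁ - Y₀ | W = w, A = a, S = 1]`. -/
def mfun {Ω 𝒲 : Type*} [MeasurableSpace Ω] (μ : Measure Ω) (W : Ω → 𝒲) (A S : Ω → Bool)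
    (Y₀ Y₁ : Ω → ℝ) (a : Bool) (w : 𝒲) : ℝ :=
  cexp μ (fun ω => Y₁ ω - Y₀ ω) (evtWAS W A S w a true)

/-- The true propensity `g_{a,s}(w) = μ({A = a, S = s} | {W = w})`. -/
def gprop {Ω 𝒲 : Type*} [MeasurableSpace Ω] (μ : Measure Ω) (W : Ω → 𝒲) (A S : Ω → Bool)
    (a s : Bool) (w : 𝒲) : ℝ :=
  ((μ[|{ω | W ω = w}]) {ω | A ω = a ∧ S ω = s}).toReal

/-- The target statistical parameter `ψ(a*) = E[m₁(W) − m₀(W) | A = a*, S = 0]`. -/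
def psiParam {Ω 𝒲 : Type*} [MeasurableSpace Ω] (μ : Measure Ω) (W : Ω → 𝒲) (A S : Ω → Bool)
    (Y₀ Y₁ : Ω → ℝ) (astar : Bool) : ℝ :=
  cexp μ (fun ω => mfun μ W A S Y₀ Y₁ true (W ω) - mfun μ W A S Y₀ Y₁ false (W ω))
    (evtAS A S astar false)

/-- cancellation of the augmentation terms under the true propensities. -/
theorem augmentation_terms_cancel
    {Ω : Type*} [MeasurableSpace Ω] (μ : Measure Ω) [IsProbabilityMeasure μ]
    {𝒲 : Type*} [Fintype 𝒲] [MeasurableSpace 𝒲] [MeasurableSingletonClass 𝒲]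
    (S A : Ω → Bool) (W : Ω → 𝒲) (Y₀ Y₁ : Ω → ℝ)
    (hS : Measurable S) (hA : Measurable A) (hW : Measurable W)
    (hY₀ : Integrable Y₀ μ) (hY₁ : Integrable Y₁ μ)
    (astar : Bool)
    (hc : 0 < μ (evtAS A S astar false))
    (hpos : ∀ w : 𝒲, 0 < μ {ω | W ω = w} →
      0 < μ (evtWAS W A S w true true) ∧ 0 < μ (evtWAS W A S w false true)) :
    ∀ (a : Bool) (mstar : 𝒲 → ℝ),
    ∫ ω,
      ((if A ω = a ∧ S ω = true then
          gprop μ W A S astar false (W ω)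
            / ((μ (evtAS A S astar false)).toReal * gprop μ W A S a true (W ω))
        else 0)
      - (if A ω = astar ∧ S ω = false then
          1 / (μ (evtAS A S astar false)).toReal
        else 0)) * mstar (W ω) ∂μ
    = 0 := by
  intro a mstar
  set c : ℝ := (μ (evtAS A S astar false)).toReal with hcdef
  have hcpos : 0 < c := by
    apply ENNReal.toReal_pos hc.ne' (measure_ne_top μ _)
  -- the map T
  set T : Ω → 𝒲 × Bool × Bool := fun ω => (W ω, A ω, S ω) with hT
  have hTm : Measurable T := hW.prodMk (hA.prodMk hS)
  set φ : 𝒲 × Bool × Bool → ℝ := fun x =>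
    ((if x.2.1 = a ∧ x.2.2 = true then
        gprop μ W A S astar false x.1 / (c * gprop μ W A S a true x.1) else 0)
      - (if x.2.1 = astar ∧ x.2.2 = false then 1 / c else 0)) * mstar x.1 with hφ
  have hrw : ∀ ω, ((if A ω = a ∧ S ω = true then
          gprop μ W A S astar false (W ω)
            / ((μ (evtAS A S astar false)).toReal * gprop μ W A S a true (W ω))
        else 0)
      - (if A ω = astar ∧ S ω = false then
          1 / (μ (evtAS A S astar false)).toReal
        else 0)) * mstar (W ω) = φ (T ω) := fun ω => rfl
  show ∫ ω, φ (T ω) ∂μ = 0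
  haveI : IsProbabilityMeasure (μ.map T) := Measure.isProbabilityMeasure_map hTm.aemeasurable
  rw [← integral_map hTm.aemeasurable (measurable_of_countable φ).aestronglyMeasurable,
    integral_fintype .of_finite]
  simp only [Measure.real_def]
  have hmass : ∀ w (a' s' : Bool),
      (μ.map T) {(w, a', s')} = μ (evtWAS W A S w a' s') := by
    intro w a' s'
    rw [Measure.map_apply hTm (measurableSet_singleton _)]
    congr 1
    ext ω
    simp [T, evtWAS, Prod.ext_iff]
  rw [Fintype.sum_prod_type]
  apply Finset.sum_eq_zero
  intro w _
  rw [Fintype.sum_prod_type]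
  -- per-w computation
  have key : ∀ (a' s' : Bool),
      ((μ.map T) {(w, a', s')}).toReal • φ (w, a', s')
      = (μ (evtWAS W A S w a' s')).toReal *
          (((if a' = a ∧ s' = true then
              gprop μ W A S astar false w / (c * gprop μ W A S a true w) else 0)
            - (if a' = astar ∧ s' = false then 1 / c else 0)) * mstar w) := by
    intro a' s'; rw [hmass]; simp [φ]
  simp only [key]
  -- now a finite computation over Bool × Bool
  by_cases hp : μ {ω | W ω = w} = 0
  · have hz : ∀ (a' s' : Bool), μ (evtWAS W A S w a' s') = 0 := by
      intro a' s'
      refine measure_mono_null ?_ hp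
      intro ω hω; exact hω.1
    simp [hz]
  · have hppos : 0 < μ {ω | W ω = w} := pos_iff_ne_zero.mpr hp
    have hpfin : μ {ω | W ω = w} ≠ ⊤ := measure_ne_top μ _
    set p : ℝ := (μ {ω | W ω = w}).toReal with hpdef
    have hpR : 0 < p := ENNReal.toReal_pos hp hpfin
    -- gprop formula
    have hg : ∀ (a' s' : Bool), gprop μ W A S a' s' w
        = (μ (evtWAS W A S w a' s')).toReal / p := by
      intro a' s'
      have hms : MeasurableSet {ω | W ω = w} := hW (measurableSet_singleton w)
      rw [gprop, ProbabilityTheory.cond_apply hms]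
      have hset : {ω | W ω = w} ∩ {ω | A ω = a' ∧ S ω = s'} = evtWAS W A S w a' s' := by
        ext ω
        simp only [Set.mem_inter_iff, Set.mem_setOf_eq, evtWAS]
      rw [hset, ENNReal.toReal_mul, ENNReal.toReal_inv]
      rw [div_eq_inv_mul]
    have hq1 : 0 < μ (evtWAS W A S w a true) := by
      cases a
      · exact (hpos w hppos).2
      · exact (hpos w hppos).1
    have hq1R : 0 < (μ (evtWAS W A S w a true)).toReal :=
      ENNReal.toReal_pos hq1.ne' (measure_ne_top μ _)
    have hgat : gprop μ W A S a true w = (μ (evtWAS W A S w a true)).toReal / p := hg a true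
    have hgas : gprop μ W A S astar false w
        = (μ (evtWAS W A S w astar false)).toReal / p := hg astar false
    -- expand the sum over Bool × Bool
    rw [Fintype.sum_bool]
    rw [Fintype.sum_bool, Fintype.sum_bool]
    set q1 := (μ (evtWAS W A S w a true)).toReal
    set q0 := (μ (evtWAS W A S w astar false)).toReal
    have hkey : q1 * (gprop μ W A S astar false w / (c * gprop μ W A S a true w))
        = q0 * (1 / c) := by
      rw [hgat, hgas]
      field_simp
    cases a <;> cases astar <;>
      · simp only [Bool.true_eq_false, Bool.false_eq_true, and_true, and_false, true_and,
          false_and, if_true, if_false, reduceIte]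
        linear_combination mstar w * hkey

end
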